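/- LengthInterval game: let x₁ < x₂ < … < xₙ be real numbers, P = {x₁,…,xₙ}, and let the characteristic function be v_li(Q) = max(Q) − min(Q) for nonempty Q ⊆ P (and v_li(∅)=0). Then for each i ∈ {1,…,n}, φ(xᵢ, v_li) = Σ_{j=2}^{i} (xⱼ − x_{j−1})/(n − j + 1) + Σ_{j=i}^{n−1} (x_{j+1} − xⱼ)/j − (xₙ − x₁)/n. -/

import Mathlib

open Finset

/-- The Shapley value of player `p` in the coalitional game with player set `P`
and characteristic function `v`. -/
noncomputable def shapley {α : Type*} [DecidableEq α] (P : Finset α) (v : Finset α → ℝ)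
    (p : α) : ℝ :=
  if hp : p ∈ P then
    (∑ π : {x // x ∈ P} ≃ Fin P.card,
      (v ((P.attach.filter fun q => π q ≤ π ⟨p, hp⟩).image Subtype.val) -
        v (((P.attach.filter fun q => π q ≤ π ⟨p, hp⟩).image Subtype.val).erase p))) /
      (P.card).factorial
  else 0

lemma count_min_card {β : Type*} [Fintype β] [DecidableEq β] {m : ℕ} (hm : Fintype.card β = m)
    (t : Finset β) (p : β) (hp : p ∈ t) :
    ((univ.filter fun π : β ≃ Fin m => ∀ q ∈ t, π p ≤ π q).card) * t.card = m.factorial := by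
  classical
  have hcard : Fintype.card (β ≃ Fin m) = m.factorial := by
    rw [Fintype.card_equiv (Fintype.equivFinOfCardEq hm), hm]
  set F : β → Finset (β ≃ Fin m) := fun q => univ.filter fun π => ∀ r ∈ t, π q ≤ π r with hF
  have hdisj : ∀ q ∈ t, ∀ q' ∈ t, q ≠ q' → Disjoint (F q) (F q') := by
    intro q hq q' hq' hne
    rw [Finset.disjoint_left]
    intro π hπ hπ'
    simp only [hF, mem_filter, mem_univ, true_and] at hπ hπ'
    exact hne (π.injective (le_antisymm (hπ q' hq') (hπ' q hq)))
  have hcover : t.biUnion F = univ := by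
    apply Finset.eq_univ_of_forall
    intro π
    obtain ⟨q, hq, hqmin⟩ := Finset.exists_min_image t π ⟨p, hp⟩
    exact Finset.mem_biUnion.2 ⟨q, hq, by simp only [hF, mem_filter, mem_univ, true_and]; exact hqmin⟩
  have hsame : ∀ q ∈ t, (F q).card = (F p).card := by
    intro q hq
    apply Finset.card_nbij' (fun π => (Equiv.swap p q).trans π) (fun π => (Equiv.swap p q).trans π)
    · intro π hπ
      simp only [hF, mem_coe, mem_filter, mem_univ, true_and] at hπ ⊢
      intro r hr
      have h1 : (Equiv.swap p q) p = q := Equiv.swap_apply_left p q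
      have h2 : Equiv.swap p q r ∈ t := by
        rcases eq_or_ne r p with rfl | hrp
        · simpa using hq
        · rcases eq_or_ne r q with rfl | hrq
          · simpa using hp
          · rwa [Equiv.swap_apply_of_ne_of_ne hrp hrq]
      simpa using hπ _ h2
    · intro π hπ
      simp only [hF, mem_coe, mem_filter, mem_univ, true_and] at hπ ⊢
      intro r hr
      have h2 : Equiv.swap p q r ∈ t := by
        rcases eq_or_ne r p with rfl | hrp
        · simpa using hq
        · rcases eq_or_ne r q with rfl | hrq
          · simpa using hp
          · rwa [Equiv.swap_apply_of_ne_of_ne hrp hrq]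
      simpa using hπ _ h2
    · intro π _; ext r; simp
    · intro π _; ext r; simp
  have : m.factorial = ∑ q ∈ t, (F q).card := by
    rw [← Finset.card_biUnion hdisj, hcover, ← hcard, Finset.card_univ]
  rw [this, Finset.sum_congr rfl hsame, Finset.sum_const, smul_eq_mul, mul_comm]

lemma sum_telescope_Icc (X : ℕ → ℝ) (a b : ℕ) (hab : a ≤ b) :
    ∑ j ∈ Icc (a+1) b, (X j - X (j-1)) = X b - X a := by
  induction b, hab using Nat.le_induction with
  | base => simp
  | succ b hab ih =>
    have h : Icc (a+1) (b+1) = insert (b+1) (Icc (a+1) b) := by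
      ext k; simp [Finset.mem_Icc, Finset.mem_insert]; omega
    rw [h, Finset.sum_insert (by simp [Finset.mem_Icc]), ih]
    simp

lemma Xle (n : ℕ) (X : ℕ → ℝ) (hmono : ∀ i j : ℕ, 1 ≤ i → i < j → j ≤ n → X i < X j) :
    ∀ a b, 1 ≤ a → a ≤ b → b ≤ n → X a ≤ X b := by
  intro a b ha hab hb
  rcases eq_or_lt_of_le hab with rfl | h
  · exact le_refl _
  · exact (hmono a b ha h hb).le

lemma max_image (n : ℕ) (X : ℕ → ℝ) (hmono : ∀ i j : ℕ, 1 ≤ i → i < j → j ≤ n → X i < X j)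
    (I : Finset ℕ) (hI : I.Nonempty) (hsub : I ⊆ Icc 1 n) :
    (I.image X).max' (hI.image X) = X (I.max' hI) := by
  apply le_antisymm
  · apply Finset.max'_le
    intro y hy
    obtain ⟨k, hk, rfl⟩ := Finset.mem_image.1 hy
    have hk' := Finset.mem_Icc.1 (hsub hk)
    have hm' := Finset.mem_Icc.1 (hsub (I.max'_mem hI))
    exact Xle n X hmono k _ hk'.1 (Finset.le_max' I k hk) hm'.2
  · exact Finset.le_max' _ _ (Finset.mem_image_of_mem X (I.max'_mem hI))

lemma min_image (n : ℕ) (X : ℕ → ℝ) (hmono : ∀ i j : ℕ, 1 ≤ i → i < j → j ≤ n → X i < X j)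
    (I : Finset ℕ) (hI : I.Nonempty) (hsub : I ⊆ Icc 1 n) :
    (I.image X).min' (hI.image X) = X (I.min' hI) := by
  apply le_antisymm
  · exact Finset.min'_le _ _ (Finset.mem_image_of_mem X (I.min'_mem hI))
  · apply Finset.le_min'
    intro y hy
    obtain ⟨k, hk, rfl⟩ := Finset.mem_image.1 hy
    have hk' := Finset.mem_Icc.1 (hsub hk)
    have hm' := Finset.mem_Icc.1 (hsub (I.min'_mem hI))
    exact Xle n X hmono _ k hm'.1 (Finset.min'_le I k hk) hk'.2

/-- indicator condition -/
def indCond (i j : ℕ) (S : Finset ℕ) : Prop :=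
  S.Nonempty ∧ ((j ≤ i ∧ ∀ k ∈ S, k < j) ∨ (i < j ∧ ∀ k ∈ S, j ≤ k))

instance (i j : ℕ) (S : Finset ℕ) : Decidable (indCond i j S) := by
  unfold indCond; infer_instance

lemma marg_eq (n : ℕ) (X : ℕ → ℝ) (hmono : ∀ i j : ℕ, 1 ≤ i → i < j → j ≤ n → X i < X j)
    (i : ℕ) (hi1 : 1 ≤ i) (hin : i ≤ n)
    (S : Finset ℕ) (hS : S ⊆ Icc 1 n) (hiS : i ∉ S) :
    (fun Q : Finset ℝ => if h : Q.Nonempty then Q.max' h - Q.min' h else 0)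
        ((insert i S).image X) -
      (fun Q : Finset ℝ => if h : Q.Nonempty then Q.max' h - Q.min' h else 0) (S.image X) =
    ∑ j ∈ Icc 2 n, (X j - X (j-1)) * (if indCond i j S then 1 else 0) := by
  rcases S.eq_empty_or_nonempty with rfl | hSne
  · simp [indCond]
  · have hSim : (S.image X).Nonempty := hSne.image X
    have hins : ((insert i S).image X).Nonempty := (Finset.insert_nonempty i S).image X
    have hisub : insert i S ⊆ Icc 1 n := by
      intro k hk; rcases Finset.mem_insert.1 hk with rfl | h
      · exact Finset.mem_Icc.2 ⟨hi1, hin⟩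
      · exact hS h
    simp only [dif_pos hins, dif_pos hSim]
    rw [max_image n X hmono _ (Finset.insert_nonempty i S) hisub,
        min_image n X hmono _ (Finset.insert_nonempty i S) hisub,
        max_image n X hmono S hSne hS, min_image n X hmono S hSne hS]
    set M := S.max' hSne with hM
    set m := S.min' hSne with hm
    have hMS : M ∈ S := S.max'_mem hSne
    have hmS : m ∈ S := S.min'_mem hSne
    have hmM : m ≤ M := Finset.min'_le S M hMS
    have hm1 : 1 ≤ m := (Finset.mem_Icc.1 (hS hmS)).1
    have hMn : M ≤ n := (Finset.mem_Icc.1 (hS hMS)).2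
    have hmaxins : (insert i S).max' ⟨i, Finset.mem_insert_self i S⟩ = max i M := by
      rw [Finset.max'_insert]
    have hminins : (insert i S).min' ⟨i, Finset.mem_insert_self i S⟩ = min i m := by
      rw [Finset.min'_insert]
    rw [hmaxins, hminins]
    -- rewrite the indicator conditions via max'/min'
    have hcond : ∀ j, indCond i j S ↔ ((j ≤ i ∧ M < j) ∨ (i < j ∧ j ≤ m)) := by
      intro j
      unfold indCond
      rw [← Finset.max'_lt_iff S hSne, ← Finset.le_min'_iff S hSne]
      tauto
    have hsum : ∀ (a b : ℕ), a ≤ b → ((Icc 2 n).filter (fun j => indCond i j S)) = Icc (a+1) b →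
        (∑ j ∈ Icc 2 n, (X j - X (j-1)) * (if indCond i j S then (1:ℝ) else 0)) = X b - X a := by
      intro a b hab hab2
      have h1 : ∀ j ∈ Icc 2 n, (X j - X (j-1)) * (if indCond i j S then (1:ℝ) else 0)
          = if indCond i j S then (X j - X (j-1)) else 0 := by
        intro j _; split <;> ring
      rw [Finset.sum_congr rfl h1, ← Finset.sum_filter, hab2, sum_telescope_Icc X a b hab]
    rcases lt_trichotomy M i with hMi | hMi | hMi
    · -- M < i
      have hmax : i ⊔ M = i := by omega
      have hmin : i ⊓ m = m := by omega
      rw [hmax, hmin, hsum M i (by omega) ?_]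
      · ring
      · ext j
        simp only [Finset.mem_filter, Finset.mem_Icc, hcond]
        omega
    · exact absurd hM.symm (by rw [hMi]; exact fun h => hiS (h ▸ hMS))
    · rcases lt_trichotomy i m with him | him | him
      · -- i < m
        have hmax : i ⊔ M = M := by omega
        have hmin : i ⊓ m = i := by omega
        rw [hmax, hmin, hsum i m (by omega) ?_]
        · ring
        · ext j
          simp only [Finset.mem_filter, Finset.mem_Icc, hcond]
          omega
      · exact absurd him (by intro h; exact hiS (h ▸ hmS))
      · -- m < i < M
        have hmax : i ⊔ M = M := by omega
        have hmin : i ⊓ m = m := by omega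
        have hfil : ((Icc 2 n).filter (fun j => indCond i j S)) = ∅ := by
          ext j
          simp only [Finset.mem_filter, Finset.mem_Icc, hcond, Finset.notMem_empty, iff_false]
          omega
        have h1 : ∀ j ∈ Icc 2 n, (X j - X (j-1)) * (if indCond i j S then (1:ℝ) else 0)
            = if indCond i j S then (X j - X (j-1)) else 0 := by
          intro j _; split <;> ring
        rw [hmax, hmin, Finset.sum_congr rfl h1, ← Finset.sum_filter, hfil]
        simp

lemma final_sum (n i : ℕ) (X : ℕ → ℝ) (hi1 : 1 ≤ i) (hin : i ≤ n) :
    (∑ j ∈ Icc 2 n, (X j - X (j-1)) * (1/(if j ≤ i then (n:ℝ)-(j:ℝ)+1 else (j:ℝ)-1) - 1/(n:ℝ)))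
    = (∑ j ∈ Icc 2 i, (X j - X (j - 1)) / ((n : ℝ) - (j : ℝ) + 1)) +
        (∑ j ∈ Icc i (n - 1), (X (j + 1) - X j) / (j : ℝ)) -
        (X n - X 1) / (n : ℝ) := by
  have hn1 : 1 ≤ n := le_trans hi1 hin
  have split : ∀ j ∈ Icc 2 n, (X j - X (j-1)) * (1/(if j ≤ i then (n:ℝ)-(j:ℝ)+1 else (j:ℝ)-1) - 1/(n:ℝ))
      = (X j - X (j-1)) / (if j ≤ i then (n:ℝ)-(j:ℝ)+1 else (j:ℝ)-1) - (X j - X (j-1)) / n := by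
    intro j _; rw [mul_sub, mul_one_div, mul_one_div]
  rw [Finset.sum_congr rfl split, Finset.sum_sub_distrib]
  have htel : ∑ j ∈ Icc 2 n, (X j - X (j-1)) / (n:ℝ) = (X n - X 1)/(n:ℝ) := by
    rw [← Finset.sum_div, show (2:ℕ) = 1 + 1 from rfl, sum_telescope_Icc X 1 n hn1]
  rw [htel]
  have hmain : ∑ j ∈ Icc 2 n, (X j - X (j-1)) / (if j ≤ i then (n:ℝ)-(j:ℝ)+1 else (j:ℝ)-1)
      = (∑ j ∈ Icc 2 i, (X j - X (j - 1)) / ((n : ℝ) - (j : ℝ) + 1)) +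
        (∑ j ∈ Icc i (n - 1), (X (j + 1) - X j) / (j : ℝ)) := by
    rw [show Icc 2 n = Ioc 1 n from Finset.Icc_add_one_left_eq_Ioc 1 n,
      ← Finset.sum_Ioc_consecutive _ hi1 hin]
    congr 1
    · rw [← Finset.Icc_add_one_left_eq_Ioc]
      apply Finset.sum_congr rfl
      intro j hj
      rw [if_pos (Finset.mem_Icc.1 hj).2]
    · rw [← Finset.Icc_add_one_left_eq_Ioc]
      have hmap : Icc (i+1) n = (Icc i (n-1)).map ⟨(· + 1), add_left_injective 1⟩ := by
        ext k; simp only [Finset.mem_Icc, Finset.mem_map, Function.Embedding.coeFn_mk]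
        constructor
        · intro hk; exact ⟨k - 1, by omega, by omega⟩
        · rintro ⟨a, ha, rfl⟩; omega
      rw [hmap, Finset.sum_map]
      apply Finset.sum_congr rfl
      intro j hj
      have hji : i ≤ j := (Finset.mem_Icc.1 hj).1
      simp only [Function.Embedding.coeFn_mk]
      rw [if_neg (by omega)]
      have h1 : j + 1 - 1 = j := by omega
      have h2 : ((j:ℝ) + 1) - 1 = (j:ℝ) := by ring
      rw [h1]
      push_cast
      rw [h2]
  rw [hmain]

/-- The LengthInterval game: players are reals `X 1 < ⋯ < X n`, the worth of a
nonempty coalition is its maximum minus its minimum, and the Shapley value of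
`X i` is `∑_{j=2}^{i}(X j − X (j−1))/(n−j+1) + ∑_{j=i}^{n−1}(X (j+1) − X j)/j − (X n − X 1)/n`. -/
theorem shapley_length_interval (n : ℕ) (X : ℕ → ℝ)
    (hmono : ∀ i j : ℕ, 1 ≤ i → i < j → j ≤ n → X i < X j)
    (i : ℕ) (hi : i ∈ Finset.Icc 1 n) :
    shapley ((Finset.Icc 1 n).image X)
      (fun Q => if h : Q.Nonempty then Q.max' h - Q.min' h else 0) (X i) =
      (∑ j ∈ Finset.Icc 2 i, (X j - X (j - 1)) / ((n : ℝ) - (j : ℝ) + 1)) +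
        (∑ j ∈ Finset.Icc i (n - 1), (X (j + 1) - X j) / (j : ℝ)) -
        (X n - X 1) / (n : ℝ) := by
  classical
  obtain ⟨hi1, hin⟩ := Finset.mem_Icc.1 hi
  have hn1 : 1 ≤ n := le_trans hi1 hin
  set P := (Icc 1 n).image X with hP
  have hinj : ∀ a ∈ Icc 1 n, ∀ b ∈ Icc 1 n, X a = X b → a = b := by
    intro a ha b hb hab
    rw [Finset.mem_Icc] at ha hb
    by_contra hne
    rcases lt_or_gt_of_ne hne with h | h
    · exact absurd hab (ne_of_lt (hmono a b ha.1 h hb.2))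
    · exact absurd hab.symm (ne_of_lt (hmono b a hb.1 h ha.2))
  have hinjOn : Set.InjOn X (Icc 1 n : Finset ℕ) := by
    intro a ha b hb hab
    exact hinj a (by simpa using ha) b (by simpa using hb) hab
  have hcardP : P.card = n := by
    rw [hP, Finset.card_image_of_injOn hinjOn, Nat.card_Icc]; omega
  have hp : X i ∈ P := Finset.mem_image_of_mem X hi
  have hNfac : (0:ℝ) < (P.card.factorial : ℝ) := by positivity
  unfold shapley
  rw [dif_pos hp]
  -- notation
  set pi : {x // x ∈ P} := ⟨X i, hp⟩ with hpi
  -- the coalition before X i joins, as an index set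
  set S : ({x // x ∈ P} ≃ Fin P.card) → Finset ℕ := fun π =>
    ((Icc 1 n).filter (fun k => X k ∈ (P.attach.filter fun q => π q ≤ π pi).image Subtype.val)).erase i
    with hSdef
  have hSsub : ∀ π, S π ⊆ Icc 1 n := fun π =>
    (Finset.erase_subset _ _).trans (Finset.filter_subset _ _)
  have hiS : ∀ π, i ∉ S π := fun π => Finset.notMem_erase i _
  have hmemS : ∀ π k, k ∈ S π ↔ (k ≠ i ∧ k ∈ Icc 1 n ∧
      X k ∈ (P.attach.filter fun q => π q ≤ π pi).image Subtype.val) := by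
    intro π k
    simp only [hSdef, Finset.mem_erase, Finset.mem_filter]
  have hmemQ : ∀ (π : {x // x ∈ P} ≃ Fin P.card) (k : ℕ) (hk : X k ∈ P),
      (X k ∈ (P.attach.filter fun q => π q ≤ π pi).image Subtype.val) ↔
      π ⟨X k, hk⟩ ≤ π pi := by
    intro π k hk
    constructor
    · rintro h
      obtain ⟨q, hq, hqv⟩ := Finset.mem_image.1 h
      have : q = ⟨X k, hk⟩ := Subtype.ext hqv
      rw [← this]
      exact (Finset.mem_filter.1 hq).2
    · intro h
      exact Finset.mem_image.2 ⟨⟨X k, hk⟩,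
        Finset.mem_filter.2 ⟨Finset.mem_attach _ _, h⟩, rfl⟩
  -- step 1: each marginal contribution as a sum of indicators
  have key : ∀ π : {x // x ∈ P} ≃ Fin P.card,
      ((fun Q : Finset ℝ => if h : Q.Nonempty then Q.max' h - Q.min' h else 0)
          ((P.attach.filter fun q => π q ≤ π pi).image Subtype.val) -
        (fun Q : Finset ℝ => if h : Q.Nonempty then Q.max' h - Q.min' h else 0)
          (((P.attach.filter fun q => π q ≤ π pi).image Subtype.val).erase (X i))) =
      ∑ j ∈ Icc 2 n, (X j - X (j-1)) * (if indCond i j (S π) then (1:ℝ) else 0) := by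
    intro π
    set Q := (P.attach.filter fun q => π q ≤ π pi).image Subtype.val with hQdef
    have hXiQ : X i ∈ Q := by
      rw [hmemQ π i hp]
    have hQI : Q = (insert i (S π)).image X := by
      ext x
      constructor
      · intro hx
        have hxP : x ∈ P := by
          obtain ⟨q, _, hqv⟩ := Finset.mem_image.1 hx
          rw [← hqv]; exact q.2
        obtain ⟨k, hk, rfl⟩ := Finset.mem_image.1 hxP
        apply Finset.mem_image_of_mem
        rcases eq_or_ne k i with rfl | hki
        · exact Finset.mem_insert_self _ _
        · exact Finset.mem_insert_of_mem ((hmemS π k).2 ⟨hki, hk, hx⟩)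
      · intro hx
        obtain ⟨k, hk, rfl⟩ := Finset.mem_image.1 hx
        rcases Finset.mem_insert.1 hk with rfl | hkS
        · exact hXiQ
        · exact ((hmemS π k).1 hkS).2.2
    have herase : Q.erase (X i) = (S π).image X := by
      ext x
      simp only [Finset.mem_erase, hQI, Finset.mem_image]
      constructor
      · rintro ⟨hne, k, hk, rfl⟩
        rcases Finset.mem_insert.1 hk with rfl | hkS
        · exact absurd rfl hne
        · exact ⟨k, hkS, rfl⟩
      · rintro ⟨k, hkS, rfl⟩
        refine ⟨?_, k, Finset.mem_insert_of_mem hkS, rfl⟩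
        intro hXk
        exact (hiS π) (by
          have : k = i := hinj k (hSsub π hkS) i hi hXk
          rwa [this] at hkS)
    rw [herase, hQI]
    exact marg_eq n X hmono i hi1 hin (S π) (hSsub π) (hiS π)
  rw [Finset.sum_congr rfl (fun π _ => key π)]
  rw [Finset.sum_comm]

  -- bridge between permutation conditions and index sets
  have hbridge : ∀ (π : {x // x ∈ P} ≃ Fin P.card) (J : Finset ℕ), J ⊆ Icc 1 n →
      ((∀ q ∈ P.attach.filter (fun q : {x // x ∈ P} => (q:ℝ) ∈ J.image X), π pi ≤ π q) ↔ ∀ k ∈ J, k ∉ S π) := by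
    intro π J hJ
    constructor
    · intro h k hkJ hkS
      obtain ⟨hki, hkIcc, hkQ⟩ := (hmemS π k).1 hkS
      obtain ⟨q0, hq0f, hq0v⟩ := Finset.mem_image.1 hkQ
      have h1 : π q0 ≤ π pi := (Finset.mem_filter.1 hq0f).2
      have h2 : π pi ≤ π q0 := h q0 (Finset.mem_filter.2 ⟨Finset.mem_attach _ _,
        by rw [hq0v]; exact Finset.mem_image_of_mem X hkJ⟩)
      have h3 : q0 = pi := π.injective (le_antisymm h1 h2)
      apply hki
      apply hinj k hkIcc i hi
      rw [← hq0v, h3]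
    · intro h q hq
      obtain ⟨hqa, hqim⟩ := Finset.mem_filter.1 hq
      obtain ⟨k, hkJ, hkv⟩ := Finset.mem_image.1 hqim
      rcases eq_or_ne k i with rfl | hki
      · have hqpi : q = pi := Subtype.ext hkv.symm
        rw [hqpi]
      · by_contra hcon
        have hle : π q ≤ π pi := le_of_not_ge hcon
        exact h k hkJ ((hmemS π k).2 ⟨hki, hJ hkJ,
          Finset.mem_image.2 ⟨q, Finset.mem_filter.2 ⟨hqa, hle⟩, hkv.symm⟩⟩)
  -- the relevant index windows
  have hJsub : ∀ j ∈ Icc 2 n, (if j ≤ i then Icc j n else Icc 1 (j-1)) ⊆ Icc 1 n := by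
    intro j hj
    rw [Finset.mem_Icc] at hj
    split
    · intro k hk; rw [Finset.mem_Icc] at *; omega
    · intro k hk; rw [Finset.mem_Icc] at *; omega
  have hiJ : ∀ j ∈ Icc 2 n, i ∈ (if j ≤ i then Icc j n else Icc 1 (j-1)) := by
    intro j hj
    rw [Finset.mem_Icc] at hj
    split
    · rw [Finset.mem_Icc]; omega
    · rw [Finset.mem_Icc]; next hc => omega
  -- indicator equivalence
  have hiff : ∀ j ∈ Icc 2 n, ∀ π : {x // x ∈ P} ≃ Fin P.card, indCond i j (S π) ↔
      ((∀ q ∈ P.attach.filter (fun q : {x // x ∈ P} => (q:ℝ) ∈ ((if j ≤ i then Icc j n else Icc 1 (j-1)) : Finset ℕ).image X), π pi ≤ π q) ∧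
       ¬(∀ q ∈ P.attach.filter (fun q : {x // x ∈ P} => (q:ℝ) ∈ ((Icc 1 n).image X)), π pi ≤ π q)) := by
    intro j hj π
    rw [hbridge π _ (hJsub j hj), hbridge π (Icc 1 n) subset_rfl]
    rw [Finset.mem_Icc] at hj
    unfold indCond
    by_cases hji : j ≤ i
    · rw [if_pos hji]
      constructor
      · rintro ⟨⟨w, hw⟩, hd⟩
        have hw' : ∀ k ∈ S π, k < j := by
          rcases hd with ⟨_, h'⟩ | ⟨hij, _⟩
          · exact h'
          · omega
        refine ⟨fun k hk hkS => ?_, fun hall => hall w (hSsub π hw) hw⟩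
        have h1 := hw' k hkS
        rw [Finset.mem_Icc] at hk
        omega
      · rintro ⟨hJ', hfull⟩
        have hne : (S π).Nonempty := by
          by_contra hemp
          rw [Finset.not_nonempty_iff_eq_empty] at hemp
          exact hfull (fun k _ hkS => by rw [hemp] at hkS; exact absurd hkS (Finset.notMem_empty k))
        refine ⟨hne, Or.inl ⟨hji, fun k hkS => ?_⟩⟩
        by_contra hkj
        have hkIcc := Finset.mem_Icc.1 (hSsub π hkS)
        exact hJ' k (Finset.mem_Icc.2 ⟨by omega, hkIcc.2⟩) hkS
    · rw [if_neg hji]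
      constructor
      · rintro ⟨⟨w, hw⟩, hd⟩
        have hw' : ∀ k ∈ S π, j ≤ k := by
          rcases hd with ⟨h', _⟩ | ⟨_, h'⟩
          · omega
          · exact h'
        refine ⟨fun k hk hkS => ?_, fun hall => hall w (hSsub π hw) hw⟩
        have h1 := hw' k hkS
        rw [Finset.mem_Icc] at hk
        omega
      · rintro ⟨hJ', hfull⟩
        have hne : (S π).Nonempty := by
          by_contra hemp
          rw [Finset.not_nonempty_iff_eq_empty] at hemp
          exact hfull (fun k _ hkS => by rw [hemp] at hkS; exact absurd hkS (Finset.notMem_empty k))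
        refine ⟨hne, Or.inr ⟨by omega, fun k hkS => ?_⟩⟩
        by_contra hkj
        have hkIcc := Finset.mem_Icc.1 (hSsub π hkS)
        exact hJ' k (Finset.mem_Icc.2 ⟨by omega, by omega⟩) hkS
  -- cardinality of the filtered attach sets
  have htcard : ∀ J : Finset ℕ, J ⊆ Icc 1 n →
      (P.attach.filter (fun q : {x // x ∈ P} => (q:ℝ) ∈ J.image X)).card = J.card := by
    intro J hJ
    have h1 : (P.attach.filter (fun q : {x // x ∈ P} => (q:ℝ) ∈ J.image X)).card = (J.image X).card := by
      refine Finset.card_bij (fun q _ => (q : ℝ)) ?_ ?_ ?_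
      · intro q hq; exact (Finset.mem_filter.1 hq).2
      · intro a _ b _ hab; exact Subtype.ext hab
      · intro y hy
        obtain ⟨k, hk, rfl⟩ := Finset.mem_image.1 hy
        exact ⟨⟨X k, Finset.mem_image_of_mem X (hJ hk)⟩,
          Finset.mem_filter.2 ⟨Finset.mem_attach _ _, hy⟩, rfl⟩
    rw [h1, Finset.card_image_of_injOn (hinjOn.mono (Finset.coe_subset.2 hJ))]
  -- the counting identities
  have hcnt : ∀ J : Finset ℕ, J ⊆ Icc 1 n → i ∈ J →
      ((univ.filter fun π : {x // x ∈ P} ≃ Fin P.card =>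
          ∀ q ∈ P.attach.filter (fun q : {x // x ∈ P} => (q:ℝ) ∈ J.image X), π pi ≤ π q).card) * J.card
        = (P.card).factorial := by
    intro J hJ hiJ'
    have h0 : pi ∈ P.attach.filter (fun q : {x // x ∈ P} => (q:ℝ) ∈ J.image X) :=
      Finset.mem_filter.2 ⟨Finset.mem_attach _ _, Finset.mem_image_of_mem X hiJ'⟩
    have := count_min_card (Fintype.card_coe P)
      (P.attach.filter (fun q : {x // x ∈ P} => (q:ℝ) ∈ J.image X)) pi h0
    rwa [htcard J hJ] at this
  -- rewrite each inner sum
  have hstep2 : ∀ j ∈ Icc 2 n,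
      (∑ π : {x // x ∈ P} ≃ Fin P.card, (X j - X (j-1)) * (if indCond i j (S π) then (1:ℝ) else 0))
      = (X j - X (j-1)) * ((1/(if j ≤ i then (n:ℝ)-(j:ℝ)+1 else (j:ℝ)-1) - 1/(n:ℝ)) * (P.card).factorial) := by
    intro j hj
    rw [← Finset.mul_sum]
    congr 1
    set J := (if j ≤ i then Icc j n else Icc 1 (j-1) : Finset ℕ) with hJdef
    have hA : ∀ π : {x // x ∈ P} ≃ Fin P.card,
        (if indCond i j (S π) then (1:ℝ) else 0) =
        (if (∀ q ∈ P.attach.filter (fun q : {x // x ∈ P} => (q:ℝ) ∈ J.image X), π pi ≤ π q) then (1:ℝ) else 0)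
          - (if (∀ q ∈ P.attach.filter (fun q : {x // x ∈ P} => (q:ℝ) ∈ ((Icc 1 n).image X)), π pi ≤ π q) then (1:ℝ) else 0) := by
      intro π
      have himp : (∀ q ∈ P.attach.filter (fun q : {x // x ∈ P} => (q:ℝ) ∈ ((Icc 1 n).image X)), π pi ≤ π q) →
          (∀ q ∈ P.attach.filter (fun q : {x // x ∈ P} => (q:ℝ) ∈ J.image X), π pi ≤ π q) := by
        intro h q hq
        obtain ⟨hqa, hqm⟩ := Finset.mem_filter.1 hq
        refine h q (Finset.mem_filter.2 ⟨hqa, ?_⟩)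
        obtain ⟨k, hk, hkv⟩ := Finset.mem_image.1 hqm
        exact Finset.mem_image.2 ⟨k, hJsub j hj hk, hkv⟩
      rw [if_congr (hiff j hj π) rfl rfl]
      by_cases hA' : (∀ q ∈ P.attach.filter (fun q : {x // x ∈ P} => (q:ℝ) ∈ J.image X), π pi ≤ π q)
      · by_cases hB' : (∀ q ∈ P.attach.filter (fun q : {x // x ∈ P} => (q:ℝ) ∈ ((Icc 1 n).image X)), π pi ≤ π q)
        · rw [if_neg (by tauto), if_pos hA', if_pos hB']; norm_num
        · rw [if_pos ⟨hA', hB'⟩, if_pos hA', if_neg hB']; norm_num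
      · by_cases hB' : (∀ q ∈ P.attach.filter (fun q : {x // x ∈ P} => (q:ℝ) ∈ ((Icc 1 n).image X)), π pi ≤ π q)
        · exact absurd (himp hB') hA'
        · rw [if_neg (by tauto), if_neg hA', if_neg hB']; norm_num
    rw [Finset.sum_congr rfl (fun π _ => hA π), Finset.sum_sub_distrib,
      Finset.sum_boole, Finset.sum_boole]
    -- now use the counting identities
    have hfact0 : ((P.card).factorial : ℝ) ≠ 0 := by positivity
    have hcard1 : (J.card : ℝ) = (if j ≤ i then (n:ℝ)-(j:ℝ)+1 else (j:ℝ)-1) := by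
      rw [Finset.mem_Icc] at hj
      rw [hJdef]
      split
      · rw [Nat.card_Icc]
        have : n + 1 - j = n - j + 1 := by omega
        rw [this]
        push_cast [Nat.cast_sub (by omega : j ≤ n)]
        ring
      · rw [Nat.card_Icc]
        have : j - 1 + 1 - 1 = j - 1 := by omega
        rw [this]
        push_cast [Nat.cast_sub (by omega : 1 ≤ j)]
        ring
    have hcardF : ((Icc 1 n).card : ℝ) = (n : ℝ) := by
      rw [Nat.card_Icc]; simp
    have hJpos : (0:ℝ) < (if j ≤ i then (n:ℝ)-(j:ℝ)+1 else (j:ℝ)-1) := by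
      rw [Finset.mem_Icc] at hj
      split
      · have : (j:ℝ) ≤ (n:ℝ) := by exact_mod_cast hj.2
        linarith
      · have : (2:ℝ) ≤ (j:ℝ) := by exact_mod_cast hj.1
        linarith
    have hnpos : (0:ℝ) < (n:ℝ) := by
      have : (1:ℝ) ≤ (n:ℝ) := by exact_mod_cast hn1
      linarith
    have e1 := hcnt J (hJsub j hj) (hiJ j hj)
    have e2 := hcnt (Icc 1 n) subset_rfl hi
    have e1' : ((univ.filter fun π : {x // x ∈ P} ≃ Fin P.card =>
        ∀ q ∈ P.attach.filter (fun q : {x // x ∈ P} => (q:ℝ) ∈ J.image X), π pi ≤ π q).card : ℝ)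
        * (J.card : ℝ) = ((P.card).factorial : ℝ) := by exact_mod_cast e1
    have e2' : ((univ.filter fun π : {x // x ∈ P} ≃ Fin P.card =>
        ∀ q ∈ P.attach.filter (fun q : {x // x ∈ P} => (q:ℝ) ∈ ((Icc 1 n).image X)), π pi ≤ π q).card : ℝ)
        * ((Icc 1 n).card : ℝ) = ((P.card).factorial : ℝ) := by exact_mod_cast e2
    rw [hcard1] at e1'
    rw [hcardF] at e2'
    have h4 := (eq_div_iff (ne_of_gt hJpos)).2 e1'
    have h5 := (eq_div_iff (ne_of_gt hnpos)).2 e2'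
    rw [sub_mul, one_div_mul_eq_div, one_div_mul_eq_div, h4, h5]
  rw [Finset.sum_congr rfl hstep2]
  have hfact0 : ((P.card).factorial : ℝ) ≠ 0 := by positivity
  have : ∀ j ∈ Icc 2 n, (X j - X (j-1)) *
      ((1/(if j ≤ i then (n:ℝ)-(j:ℝ)+1 else (j:ℝ)-1) - 1/(n:ℝ)) * (P.card).factorial)
      = ((X j - X (j-1)) * (1/(if j ≤ i then (n:ℝ)-(j:ℝ)+1 else (j:ℝ)-1) - 1/(n:ℝ))) * (P.card).factorial := by
    intro j _; ring
  rw [Finset.sum_congr rfl this, ← Finset.sum_mul, mul_div_assoc,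
    div_self hfact0, mul_one]
  exact final_sum n i X hi1 hin
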